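/- Let B be an invertible 2×2 real (or complex) matrix and x a vector with ‖x‖ = 1. Then max{‖B²x‖, ‖Bx‖, ‖B⁻¹x‖, ‖B⁻²x‖} ≥ 1/2. -/
import Mathlib

private lemma aux_half {E : Type*} [NormedAddCommGroup E] [NormedSpace ℝ E]
    {a b c : ℝ} {x u w : E} (hx : ‖x‖ = 1) (ha : a ≠ 0)
    (hb : |b| ≤ |a|) (hc : |c| ≤ |a|)
    (h : a • x + b • u + c • w = 0) : (1 / 2 : ℝ) ≤ max ‖u‖ ‖w‖ := by
  have ha' : (0 : ℝ) < |a| := abs_pos.mpr ha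
  have key : a • x = -(b • u + c • w) := by
    rw [eq_neg_iff_add_eq_zero]
    rw [← add_assoc]; exact h
  have hnorm : |a| ≤ |a| * (‖u‖ + ‖w‖) := by
    have h1 : ‖a • x‖ = |a| := by rw [norm_smul, hx, Real.norm_eq_abs, mul_one]
    have h2 : ‖a • x‖ ≤ |b| * ‖u‖ + |c| * ‖w‖ := by
      rw [key, norm_neg]
      calc ‖b • u + c • w‖ ≤ ‖b • u‖ + ‖c • w‖ := norm_add_le _ _
        _ = |b| * ‖u‖ + |c| * ‖w‖ := by rw [norm_smul, norm_smul]; simp [Real.norm_eq_abs]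
    have h3 : |b| * ‖u‖ + |c| * ‖w‖ ≤ |a| * ‖u‖ + |a| * ‖w‖ := by
      exact add_le_add (mul_le_mul_of_nonneg_right hb (norm_nonneg u))
        (mul_le_mul_of_nonneg_right hc (norm_nonneg w))
    nlinarith [norm_nonneg u, norm_nonneg w]
  have hsum : (1 : ℝ) ≤ ‖u‖ + ‖w‖ := by
    nlinarith
  rcases le_total ‖u‖ ‖w‖ with h | h
  · have : (1 / 2 : ℝ) ≤ ‖w‖ := by linarith
    exact this.trans (le_max_right _ _)
  · have : (1 / 2 : ℝ) ≤ ‖u‖ := by linarith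
    exact this.trans (le_max_left _ _)

theorem max_pow_apply_ge_half (B : EuclideanSpace ℝ (Fin 2) ≃L[ℝ] EuclideanSpace ℝ (Fin 2))
    (x : EuclideanSpace ℝ (Fin 2)) (hx : ‖x‖ = 1) :
    (1 / 2 : ℝ) ≤
      max (max ‖B (B x)‖ ‖B x‖) (max ‖B.symm x‖ ‖B.symm (B.symm x)‖) := by
  -- three vectors in a 2-dimensional space are linearly dependent
  have hdim : ¬ LinearIndependent ℝ ![x, B x, B (B x)] := by
    intro h
    have hcard := h.fintype_card_le_finrank
    simp [finrank_euclideanSpace] at hcard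
  obtain ⟨g, hsum, i, hi⟩ := Fintype.not_linearIndependent_iff.mp hdim
  set a := g 0 with ha_def
  set b := g 1 with hb_def
  set c := g 2 with hc_def
  clear_value a b c
  have hrel : a • x + b • (B x) + c • (B (B x)) = 0 := by
    rw [Fin.sum_univ_three] at hsum
    simpa [← ha_def, ← hb_def, ← hc_def] using hsum
  have hone : a ≠ 0 ∨ b ≠ 0 ∨ c ≠ 0 := by
    fin_cases i <;> simp_all
  -- B.symm applied versions
  have hrelB : b • x + a • (B.symm x) + c • (B x) = 0 := by
    have := congrArg B.symm hrel
    simp only [map_add, map_smul, map_zero, B.symm_apply_apply] at this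
    linear_combination (norm := module) this
  have hrelBB : c • x + b • (B.symm x) + a • (B.symm (B.symm x)) = 0 := by
    have := congrArg B.symm hrelB
    simp only [map_add, map_smul, map_zero, B.symm_apply_apply] at this
    linear_combination (norm := module) this
  rcases le_total |a| |b| with h1 | h1 <;> rcases le_total |b| |c| with h2 | h2
  · -- |a| ≤ |b| ≤ |c| : c is max
    have hc0 : c ≠ 0 := by
      rintro rfl
      simp only [abs_zero] at h2
      have hb0 : b = 0 := abs_nonpos_iff.mp h2
      have ha0 : a = 0 := abs_nonpos_iff.mp (h1.trans h2)
      rcases hone with h | h | h <;> tauto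
    have := aux_half hx hc0 h2 (h1.trans h2) hrelBB
    calc (1/2 : ℝ) ≤ max ‖B.symm x‖ ‖B.symm (B.symm x)‖ := this
      _ ≤ _ := le_max_right _ _
  · rcases le_total |a| |c| with h3 | h3
    · -- b is max (|a| ≤ |b|, |c| ≤ |b|)
      have hb0 : b ≠ 0 := by
        rintro rfl
        simp only [abs_zero] at h1 h2
        have ha0 : a = 0 := abs_nonpos_iff.mp h1
        have hc0 : c = 0 := abs_nonpos_iff.mp h2
        rcases hone with h | h | h <;> tauto
      have := aux_half hx hb0 h1 h2 hrelB
      have hle : max ‖B.symm x‖ ‖B x‖ ≤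
          max (max ‖B (B x)‖ ‖B x‖) (max ‖B.symm x‖ ‖B.symm (B.symm x)‖) := by
        apply max_le
        · exact (le_max_left _ _).trans (le_max_right _ _)
        · exact (le_max_right _ _).trans (le_max_left _ _)
      exact this.trans hle
    · -- b is max again
      have hb0 : b ≠ 0 := by
        rintro rfl
        simp only [abs_zero] at h1 h2
        have ha0 : a = 0 := abs_nonpos_iff.mp h1
        have hc0 : c = 0 := abs_nonpos_iff.mp h2
        rcases hone with h | h | h <;> tauto
      have := aux_half hx hb0 h1 h2 hrelB
      have hle : max ‖B.symm x‖ ‖B x‖ ≤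
          max (max ‖B (B x)‖ ‖B x‖) (max ‖B.symm x‖ ‖B.symm (B.symm x)‖) := by
        apply max_le
        · exact (le_max_left _ _).trans (le_max_right _ _)
        · exact (le_max_right _ _).trans (le_max_left _ _)
      exact this.trans hle
  · rcases le_total |a| |c| with h3 | h3
    · -- c is max
      have hc0 : c ≠ 0 := by
        rintro rfl
        simp only [abs_zero] at h2 h3
        have hb0 : b = 0 := abs_nonpos_iff.mp h2
        have ha0 : a = 0 := abs_nonpos_iff.mp h3
        rcases hone with h | h | h <;> tauto
      have := aux_half hx hc0 h2 h3 hrelBB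
      calc (1/2 : ℝ) ≤ max ‖B.symm x‖ ‖B.symm (B.symm x)‖ := this
        _ ≤ _ := le_max_right _ _
    · -- a is max (|b| ≤ |a|, |c| ≤ |a|)
      have ha0 : a ≠ 0 := by
        rintro rfl
        simp only [abs_zero] at h1 h3
        have hb0 : b = 0 := abs_nonpos_iff.mp h1
        have hc0 : c = 0 := abs_nonpos_iff.mp h3
        rcases hone with h | h | h <;> tauto
      have := aux_half hx ha0 h1 h3 hrel
      have hle : max ‖B x‖ ‖B (B x)‖ ≤
          max (max ‖B (B x)‖ ‖B x‖) (max ‖B.symm x‖ ‖B.symm (B.symm x)‖) := by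
        apply max_le
        · exact (le_max_right _ _).trans (le_max_left _ _)
        · exact (le_max_left _ _).trans (le_max_left _ _)
      exact this.trans hle
  · -- |b| ≤ |a|, |c| ≤ |b| ≤ |a| : a is max
    have ha0 : a ≠ 0 := by
      rintro rfl
      simp only [abs_zero] at h1
      have hb0 : b = 0 := abs_nonpos_iff.mp h1
      have hc0 : c = 0 := abs_nonpos_iff.mp (h2.trans h1)
      rcases hone with h | h | h <;> tauto
    have := aux_half hx ha0 h1 (h2.trans h1) hrel
    have hle : max ‖B x‖ ‖B (B x)‖ ≤
        max (max ‖B (B x)‖ ‖B x‖) (max ‖B.symm x‖ ‖B.symm (B.symm x)‖) := by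
      apply max_le
      · exact (le_max_right _ _).trans (le_max_left _ _)
      · exact (le_max_left _ _).trans (le_max_left _ _)
    exact this.trans hle
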